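/- For any finite simple graph G on n vertices containing at least one induced complete bipartite subgraph, τ(G) ≤ n − β(G) + 1, where β(G) is the maximum number of vertices in an induced subgraph of G that is a complete bipartite graph. -/
import Mathlib


open Finset

/-- `A i`, `B i` (for `i : Fin k`) form a bipartite decomposition of `G`. -/
def IsBipDecomp {V : Type*} [DecidableEq V] (G : SimpleGraph V)
    {k : ℕ} (A B : Fin k → Finset V) : Prop :=
  (∀ i, Disjoint (A i) (B i)) ∧
  (∀ i, ∀ a ∈ A i, ∀ b ∈ B i, G.Adj a b) ∧
  ∀ e ∈ G.edgeSet, ∃! i : Fin k, e ∈ (A i ×ˢ B i).image fun p => s(p.1, p.2)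

/-- If `S` induces a complete bipartite subgraph of `G` (with parts `A0`, `B0`),
then `τ(G) ≤ n - |S| + 1`: there is a bipartite decomposition of `G` with at most
`n - |S| + 1` parts.  Since `β(G)` is the maximum size of such an `S`, this gives
`τ(G) ≤ n - β(G) + 1`. -/
theorem stmt3 {V : Type*} [Fintype V] [DecidableEq V] (G : SimpleGraph V)
    (S A0 B0 : Finset V) (hdisj : Disjoint A0 B0) (hS : A0 ∪ B0 = S)
    (hind : ∀ u ∈ S, ∀ v ∈ S,
      G.Adj u v ↔ ((u ∈ A0 ∧ v ∈ B0) ∨ (u ∈ B0 ∧ v ∈ A0))) :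
    ∃ (k : ℕ) (A B : Fin k → Finset V), IsBipDecomp G A B ∧
      k ≤ Fintype.card V - S.card + 1 := by
  classical
  set T : Finset V := Sᶜ with hT
  set e : Fin T.card ≃ {x // x ∈ T} := T.equivFin.symm with he
  set r : V → ℕ := fun v => if h : v ∈ T then (T.equivFin ⟨v, h⟩ : ℕ) else T.card with hr
  have hr_le : ∀ v, r v ≤ T.card := by
    intro v
    by_cases h : v ∈ T
    · simp only [hr, dif_pos h]
      exact (T.equivFin ⟨v, h⟩).isLt.le
    · simp [hr, h]
  have hr_mem : ∀ v, v ∈ T → r v < T.card := by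
    intro v h
    simp only [hr, dif_pos h]
    exact (T.equivFin ⟨v, h⟩).isLt
  have hr_not : ∀ v, v ∉ T → r v = T.card := by
    intro v h; simp [hr, h]
  have hr_inj : ∀ x y : V, x ∈ T → r x = r y → x = y := by
    intro x y hx hxy
    have hy : y ∈ T := by
      by_contra hy
      have := hr_not y hy
      have := hr_mem x hx
      omega
    have : (T.equivFin ⟨x, hx⟩ : ℕ) = (T.equivFin ⟨y, hy⟩ : ℕ) := by
      simpa [hr, hx, hy] using hxy
    have := T.equivFin.injective (Fin.ext this)
    simpa using congrArg Subtype.val this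
  set A : Fin (T.card + 1) → Finset V :=
    fun i => Fin.cases A0 (fun j => {(e j : V)}) i with hA
  set B : Fin (T.card + 1) → Finset V :=
    fun i => Fin.cases B0
      (fun j => Finset.univ.filter (fun w => G.Adj (e j : V) w ∧ r (e j : V) < r w)) i with hB
  have hA0sub : A0 ⊆ S := by rw [← hS]; exact subset_union_left
  have hB0sub : B0 ⊆ S := by rw [← hS]; exact subset_union_right
  have hmem : ∀ (i : Fin (T.card + 1)) (x y : V),
      (s(x, y) ∈ (A i ×ˢ B i).image fun p => s(p.1, p.2)) ↔
      (x ∈ A i ∧ y ∈ B i) ∨ (y ∈ A i ∧ x ∈ B i) := by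
    intro i x y
    simp only [mem_image, mem_product, Prod.exists]
    constructor
    · rintro ⟨a, b, ⟨ha, hb⟩, hab⟩
      rw [Sym2.eq_iff] at hab
      rcases hab with ⟨rfl, rfl⟩ | ⟨rfl, rfl⟩
      · exact Or.inl ⟨ha, hb⟩
      · exact Or.inr ⟨ha, hb⟩
    · rintro (⟨hx, hy⟩ | ⟨hy, hx⟩)
      · exact ⟨x, y, ⟨hx, hy⟩, rfl⟩
      · exact ⟨y, x, ⟨hy, hx⟩, Sym2.eq_swap⟩
  -- key lemma: edges with an endpoint of smaller rank are covered uniquely by a star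
  have key : ∀ x y : V, G.Adj x y → r x < r y →
      ∃! i : Fin (T.card + 1), s(x, y) ∈ (A i ×ˢ B i).image fun p => s(p.1, p.2) := by
    intro x y hadj hrlt
    have hxT : x ∈ T := by
      by_contra h
      have := hr_not x h
      have := hr_le y
      omega
    refine ⟨Fin.succ (e.symm ⟨x, hxT⟩), ?_, ?_⟩
    · refine (hmem _ x y).mpr (Or.inl ⟨?_, ?_⟩)
      · simp [hA]
      · simp only [hB, Fin.cases_succ, mem_filter, mem_univ, true_and,
          Equiv.apply_symm_apply]
        exact ⟨hadj, hrlt⟩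
    · intro i hi
      rw [hmem] at hi
      induction i using Fin.cases with
      | zero =>
        exfalso
        rcases hi with ⟨h1, _⟩ | ⟨_, h2⟩
        · have : x ∈ S := hA0sub (by simpa [hA] using h1)
          exact absurd this (by simpa [hT] using hxT)
        · have : x ∈ S := hB0sub (by simpa [hB] using h2)
          exact absurd this (by simpa [hT] using hxT)
      | succ j =>
        rcases hi with ⟨h1, _⟩ | ⟨h1, h2⟩
        · have hx : x = (e j : V) := by simpa [hA] using h1
          have : e j = (⟨x, hxT⟩ : {x // x ∈ T}) := Subtype.ext hx.symm
          have : j = e.symm ⟨x, hxT⟩ := by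
            rw [← this, Equiv.symm_apply_apply]
          rw [this]
        · exfalso
          have hy : y = (e j : V) := by simpa [hA] using h1
          have h2' : r (e j : V) < r x := by
            have := by simpa [hB] using h2
            exact this.2
          rw [← hy] at h2'
          omega
  refine ⟨T.card + 1, A, B, ⟨?_, ?_, ?_⟩, ?_⟩
  · -- disjointness
    intro i
    induction i using Fin.cases with
    | zero => simpa [hA, hB] using hdisj
    | succ j =>
      simp only [hA, hB, Fin.cases_succ, disjoint_singleton_left, mem_filter]
      rintro ⟨-, h, -⟩
      exact G.irrefl h
  · -- adjacency
    intro i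
    induction i using Fin.cases with
    | zero =>
      intro a ha b hb
      simp only [hA, hB, Fin.cases_zero] at ha hb
      exact (hind a (hA0sub ha) b (hB0sub hb)).mpr (Or.inl ⟨ha, hb⟩)
    | succ j =>
      intro a ha b hb
      simp only [hA, hB, Fin.cases_succ, mem_singleton, mem_filter] at ha hb
      subst ha
      exact hb.2.1
  · -- partition of edges
    intro ed hed
    induction ed using Sym2.ind with
    | _ u w =>
      rw [SimpleGraph.mem_edgeSet] at hed
      by_cases hu : u ∈ S
      · by_cases hw : w ∈ S
        · -- edge inside S: covered by part 0
          refine ⟨0, ?_, ?_⟩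
          · refine (hmem 0 u w).mpr ?_
            rcases (hind u hu w hw).mp hed with ⟨h1, h2⟩ | ⟨h1, h2⟩
            · left; exact ⟨by simpa [hA] using h1, by simpa [hB] using h2⟩
            · right; exact ⟨by simpa [hA] using h2, by simpa [hB] using h1⟩
          · intro i hi
            rw [hmem] at hi
            induction i using Fin.cases with
            | zero => rfl
            | succ j =>
              exfalso
              have hjT : (e j : V) ∉ S := by
                have := (e j).2
                simp only [hT, Finset.mem_compl] at this
                exact this
              rcases hi with ⟨h1, _⟩ | ⟨h1, _⟩
              · have : u = (e j : V) := by simpa [hA] using h1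
                rw [this] at hu
                exact hjT hu
              · have : w = (e j : V) := by simpa [hA] using h1
                rw [this] at hw
                exact hjT hw
        · -- w ∉ S, so w ∈ T; r w < r u since u ∉ T
          have hwT : w ∈ T := by simpa [hT] using hw
          have huT : u ∉ T := by simpa [hT] using hu
          have : r w < r u := by
            have := hr_mem w hwT
            have := hr_not u huT
            omega
          rw [Sym2.eq_swap]
          exact key w u hed.symm this
      · -- u ∈ T
        have huT : u ∈ T := by simpa [hT] using hu
        have hne : r u ≠ r w := fun h => hed.ne (hr_inj u w huT h)
        rcases lt_or_gt_of_ne hne with h | h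
        · exact key u w hed h
        · rw [Sym2.eq_swap]
          exact key w u hed.symm h
  · -- cardinality bound
    have : T.card = Fintype.card V - S.card := by
      simp [hT, Finset.card_compl]
    omega
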